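/- Let Q : ℝ → Matrix (Fin 3) (Fin 3) ℝ be differentiable with Q(t)ᵀ Q(t) = 1 and det Q(t) = 1 for all t, let e : ℝ → ℝ³ be differentiable, let ω̄ : ℝ → ℝ³, and let q̇ : ℝ → ℝ³ satisfy (1/2) q̇(t) × u = Q̇(t) Q(t)ᵀ u for all u ∈ ℝ³ and all t. Define ẽ(t) := Q(t)ᵀ e(t) and the transformed mean vorticity ω̃̄(t) := Q(t)ᵀ (ω̄(t) − q̇(t)). Then the relative tangent velocity transforms objectively: d/dt ẽ(t) − (1/2) ω̃̄(t) × ẽ(t) = Q(t)ᵀ ( d/dt e(t) − (1/2) ω̄(t) × e(t) ) for all t. -/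

import Mathlib

open Matrix

/-- Entrywise time derivative of a time-dependent matrix. -/
noncomputable def matDeriv (Q : ℝ → Matrix (Fin 3) (Fin 3) ℝ) (t : ℝ) :
    Matrix (Fin 3) (Fin 3) ℝ :=
  Matrix.of fun i j => deriv (fun s => Q s i j) t

/-- The cross product on Euclidean 3-space. -/
noncomputable def cross3 (a b : EuclideanSpace ℝ (Fin 3)) : EuclideanSpace ℝ (Fin 3) :=
  (EuclideanSpace.equiv (Fin 3) ℝ).symm
    (crossProduct ((EuclideanSpace.equiv (Fin 3) ℝ) a) ((EuclideanSpace.equiv (Fin 3) ℝ) b))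

lemma cross_mulVec (M : Matrix (Fin 3) (Fin 3) ℝ) (a b : Fin 3 → ℝ) :
    crossProduct (M *ᵥ a) (M *ᵥ b) = (adjugate M)ᵀ *ᵥ (crossProduct a b) := by
  funext i
  fin_cases i <;>
    simp [cross_apply, mulVec, dotProduct, adjugate_fin_three, Fin.sum_univ_three,
      transpose_apply] <;> ring

lemma adj_transpose_eq (M : Matrix (Fin 3) (Fin 3) ℝ) (h : Mᵀ * M = 1) (hd : M.det = 1) :
    (adjugate M)ᵀ = M := by
  have h2 : M * Mᵀ = 1 := mul_eq_one_comm.mp h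
  have key : adjugate M = Mᵀ := by
    calc adjugate M = adjugate M * (M * Mᵀ) := by rw [h2, mul_one]
    _ = (adjugate M * M) * Mᵀ := by rw [mul_assoc]
    _ = Mᵀ := by rw [adjugate_mul, hd, one_smul, one_mul]
  rw [key, transpose_transpose]

lemma cross3_equivariant (M : Matrix (Fin 3) (Fin 3) ℝ) (h : Mᵀ * M = 1) (hd : M.det = 1)
    (a b : EuclideanSpace ℝ (Fin 3)) :
    cross3 (Matrix.toEuclideanLin M a) (Matrix.toEuclideanLin M b)
      = Matrix.toEuclideanLin M (cross3 a b) := by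
  ext i
  show crossProduct (M *ᵥ fun j => a j) (M *ᵥ fun j => b j) i
    = (M *ᵥ crossProduct (fun j => a j) (fun j => b j)) i
  rw [cross_mulVec M, adj_transpose_eq M h hd]

lemma cross3_sub_left (a b c : EuclideanSpace ℝ (Fin 3)) :
    cross3 (a - b) c = cross3 a c - cross3 b c := by
  ext i
  show crossProduct ((fun j => a j) - fun j => b j) (fun j => c j) i
    = (crossProduct (fun j => a j) (fun j => c j)
        - crossProduct (fun j => b j) (fun j => c j)) i
  rw [map_sub, LinearMap.sub_apply]

lemma toEL_mul (A B : Matrix (Fin 3) (Fin 3) ℝ) (v : EuclideanSpace ℝ (Fin 3)) :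
    Matrix.toEuclideanLin (A * B) v = Matrix.toEuclideanLin A (Matrix.toEuclideanLin B v) := by
  ext i
  show ((A * B) *ᵥ fun j => v j) i = (A *ᵥ (B *ᵥ fun j => v j)) i
  rw [← mulVec_mulVec]

/-- Under an observer change with rotation Q(t) ∈ SO(3) whose frame
vorticity q̇ satisfies (1/2) q̇ × u = Q̇Qᵀ u, the relative tangent velocity
ė − (1/2) ω̄ × e transforms objectively. -/
theorem stmt9
    (Q : ℝ → Matrix (Fin 3) (Fin 3) ℝ)
    (hQdiff : ∀ i j : Fin 3, Differentiable ℝ (fun t => Q t i j))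
    (hQ : ∀ t : ℝ, (Q t)ᵀ * Q t = 1)
    (hdet : ∀ t : ℝ, (Q t).det = 1)
    (e : ℝ → EuclideanSpace ℝ (Fin 3))
    (he : Differentiable ℝ e)
    (ωbar qdot : ℝ → EuclideanSpace ℝ (Fin 3))
    (hqdot : ∀ (t : ℝ) (u : EuclideanSpace ℝ (Fin 3)),
      (1 / 2 : ℝ) • cross3 (qdot t) u
        = Matrix.toEuclideanLin (matDeriv Q t * (Q t)ᵀ) u)
    (et ωt : ℝ → EuclideanSpace ℝ (Fin 3))
    (het : ∀ t : ℝ, et t = Matrix.toEuclideanLin (Q t)ᵀ (e t))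
    (hωt : ∀ t : ℝ, ωt t = Matrix.toEuclideanLin (Q t)ᵀ (ωbar t - qdot t)) :
    ∀ t : ℝ,
      deriv et t - (1 / 2 : ℝ) • cross3 (ωt t) (et t)
        = Matrix.toEuclideanLin (Q t)ᵀ
            (deriv e t - (1 / 2 : ℝ) • cross3 (ωbar t) (e t)) := by
  intro t
  have hQQt : Q t * (Q t)ᵀ = 1 := mul_eq_one_comm.mp (hQ t)
  -- skew-symmetry
  have hskew : (matDeriv Q t)ᵀ * Q t + (Q t)ᵀ * matDeriv Q t = 0 := by
    ext i j
    have hconst : (fun s => ∑ k, Q s k i * Q s k j)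
        = fun _ => ((1 : Matrix (Fin 3) (Fin 3) ℝ) i j) := by
      funext s
      have h1 : ((Q s)ᵀ * Q s) i j = ∑ k, Q s k i * Q s k j := by
        simp [Matrix.mul_apply, transpose_apply]
      rw [← h1, hQ s]
    have hd0 : HasDerivAt (fun s => ∑ k, Q s k i * Q s k j) 0 t := by
      rw [hconst]; exact hasDerivAt_const _ _
    have hd2 : HasDerivAt (fun s => ∑ k, Q s k i * Q s k j)
        (∑ k, (deriv (fun s => Q s k i) t * Q t k j + Q t k i * deriv (fun s => Q s k j) t)) t :=
      HasDerivAt.fun_sum fun k _ =>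
        ((hQdiff k i t).hasDerivAt.mul (hQdiff k j t).hasDerivAt)
    have hz := hd2.unique hd0
    rw [Finset.sum_add_distrib] at hz
    simp only [Matrix.add_apply, Matrix.mul_apply, transpose_apply, Matrix.zero_apply, matDeriv,
      Matrix.of_apply]
    exact hz
  have hm3 : (Q t)ᵀ * (matDeriv Q t * (Q t)ᵀ) = -(matDeriv Q t)ᵀ := by
    have h1 : (Q t)ᵀ * matDeriv Q t = -((matDeriv Q t)ᵀ * Q t) :=
      eq_neg_of_add_eq_zero_left (by rw [add_comm]; exact hskew)
    calc (Q t)ᵀ * (matDeriv Q t * (Q t)ᵀ) = ((Q t)ᵀ * matDeriv Q t) * (Q t)ᵀ := by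
          rw [mul_assoc]
      _ = -((matDeriv Q t)ᵀ * Q t) * (Q t)ᵀ := by rw [h1]
      _ = -((matDeriv Q t)ᵀ * (Q t * (Q t)ᵀ)) := by rw [neg_mul, mul_assoc]
      _ = -(matDeriv Q t)ᵀ := by rw [hQQt, mul_one]
  -- derivative of et
  have heD : HasDerivAt e (deriv e t) t := (he t).hasDerivAt
  have hej : ∀ j : Fin 3, HasDerivAt (fun s => e s j) (deriv e t j) t := fun j =>
    (EuclideanSpace.proj j : EuclideanSpace ℝ (Fin 3) →L[ℝ] ℝ).hasFDerivAt.comp_hasDerivAt t heD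
  have hcomp : ∀ i : Fin 3, HasDerivAt (fun s => ∑ j, Q s j i * e s j)
      (∑ j, (matDeriv Q t j i * e t j + Q t j i * deriv e t j)) t := fun i =>
    HasDerivAt.fun_sum fun j _ => ((hQdiff j i t).hasDerivAt.mul (hej j))
  have hpi : HasDerivAt (fun s => ((fun i => ∑ j, Q s j i * e s j) : Fin 3 → ℝ))
      (fun i => ∑ j, (matDeriv Q t j i * e t j + Q t j i * deriv e t j)) t :=
    hasDerivAt_pi.mpr fun i => hcomp i
  have hetfun : et = fun s => (EuclideanSpace.equiv (Fin 3) ℝ).symm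
      ((fun i => ∑ j, Q s j i * e s j : Fin 3 → ℝ)) := by
    funext s
    rw [het s]
    ext i
    show ((Q s)ᵀ *ᵥ fun j => e s j) i = ∑ j, Q s j i * e s j
    simp [mulVec, dotProduct, transpose_apply]
  have hEt : HasDerivAt et ((EuclideanSpace.equiv (Fin 3) ℝ).symm
      (fun i => ∑ j, (matDeriv Q t j i * e t j + Q t j i * deriv e t j))) t := by
    rw [hetfun]
    exact (((EuclideanSpace.equiv (Fin 3) ℝ).symm :
      (Fin 3 → ℝ) →L[ℝ] EuclideanSpace ℝ (Fin 3)).hasFDerivAt).comp_hasDerivAt t hpi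
  have hDval : ((EuclideanSpace.equiv (Fin 3) ℝ).symm
      (fun i => ∑ j, (matDeriv Q t j i * e t j + Q t j i * deriv e t j))
      : EuclideanSpace ℝ (Fin 3))
      = Matrix.toEuclideanLin (matDeriv Q t)ᵀ (e t)
        + Matrix.toEuclideanLin (Q t)ᵀ (deriv e t) := by
    ext i
    show ∑ j, (matDeriv Q t j i * e t j + Q t j i * deriv e t j)
      = ((matDeriv Q t)ᵀ *ᵥ fun j => e t j) i + ((Q t)ᵀ *ᵥ fun j => deriv e t j) i
    simp [mulVec, dotProduct, transpose_apply, Finset.sum_add_distrib]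
  -- assemble
  rw [hEt.deriv, hDval, hωt, het,
    cross3_equivariant (Q t)ᵀ (by rw [transpose_transpose]; exact hQQt)
      (by rw [det_transpose]; exact hdet t),
    cross3_sub_left, map_sub, smul_sub, ← _root_.map_smul (Matrix.toEuclideanLin (Q t)ᵀ), ← _root_.map_smul (Matrix.toEuclideanLin (Q t)ᵀ), hqdot t (e t),
    ← toEL_mul, hm3]
  have hneg : Matrix.toEuclideanLin (-(matDeriv Q t)ᵀ) (e t)
      = -(Matrix.toEuclideanLin (matDeriv Q t)ᵀ (e t)) := by
    rw [map_neg]; rfl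
  rw [hneg, map_sub]
  abel
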